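/- Let E be the Grassmann algebra of an infinite-dimensional vector space over a field F of characteristic zero. If f(x_1,...,x_m) is a multilinear polynomial that is not a polynomial identity for E, then there exist elements a_1,...,a_m ∈ E such that f(a_1,...,a_m) is a nonzero element of the center Z(E) of E. -/

import Mathlib

/-- Evaluation of a noncommutative polynomial in `n` variables at elements of `A`. -/
noncomputable def polyEval {F : Type*} [CommSemiring F] {A : Type*} [Semiring A] [Algebra F A]
    {n : ℕ} (f : FreeAlgebra F (Fin n)) (v : Fin n → A) : A :=
  FreeAlgebra.lift F v f

/-- `f` is a polynomial identity for `A`. -/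
def IsIdPoly (F : Type*) [CommSemiring F] (A : Type*) [Semiring A] [Algebra F A]
    {n : ℕ} (f : FreeAlgebra F (Fin n)) : Prop :=
  ∀ v : Fin n → A, polyEval f v = 0

/-- `f` is a central polynomial for `A`. -/
def IsCentralPoly (F : Type*) [CommSemiring F] (A : Type*) [Semiring A] [Algebra F A]
    {n : ℕ} (f : FreeAlgebra F (Fin n)) : Prop :=
  ∀ v : Fin n → A, polyEval f v ∈ Set.center A

/-- `f` is a proper central polynomial for `A`. -/
def IsProperCentralPoly (F : Type*) [CommSemiring F] (A : Type*) [Semiring A] [Algebra F A]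
    {n : ℕ} (f : FreeAlgebra F (Fin n)) : Prop :=
  IsCentralPoly F A f ∧ ¬ IsIdPoly F A f

/-- The product `f·g` of two polynomials in disjoint sets of variables. -/
noncomputable def disjProd {F : Type*} [CommSemiring F] {r s : ℕ}
    (f : FreeAlgebra F (Fin r)) (g : FreeAlgebra F (Fin s)) : FreeAlgebra F (Fin (r + s)) :=
  FreeAlgebra.lift F (fun i => FreeAlgebra.ι F (Fin.castAdd s i)) f *
    FreeAlgebra.lift F (fun i => FreeAlgebra.ι F (Fin.natAdd r i)) g

/-- `A` has the primeness property on central polynomials. -/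
def HasPrimeness (F : Type*) [CommSemiring F] (A : Type*) [Semiring A] [Algebra F A] : Prop :=
  (∃ (n : ℕ) (f : FreeAlgebra F (Fin n)), IsProperCentralPoly F A f) ∧
    ∀ (r s : ℕ) (f : FreeAlgebra F (Fin r)) (g : FreeAlgebra F (Fin s)),
      IsProperCentralPoly F A (disjProd f g) →
        IsProperCentralPoly F A f ∧ IsProperCentralPoly F A g

/-- The multilinear polynomial `∑ σ, λ σ • x_{σ(1)} ⋯ x_{σ(n)}`. -/
noncomputable def mlin {F : Type*} [CommSemiring F] {n : ℕ} (lam : Equiv.Perm (Fin n) → F) :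
    FreeAlgebra F (Fin n) :=
  ∑ σ : Equiv.Perm (Fin n), lam σ • (List.ofFn fun i => FreeAlgebra.ι F (σ i)).prod

/-- Direct evaluation of the multilinear polynomial with coefficients `lam`. -/
noncomputable def mlinEval {F : Type*} [CommSemiring F] {A : Type*} [Semiring A] [Algebra F A]
    {n : ℕ} (lam : Equiv.Perm (Fin n) → F) (v : Fin n → A) : A :=
  ∑ σ : Equiv.Perm (Fin n), lam σ • (List.ofFn fun i => v (σ i)).prod

noncomputable section GrassmannAux

open CliffordAlgebra

namespace GrassmannAux

variable {R M : Type*} [CommRing R] [AddCommGroup M] [Module R M]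

local notation "Q0" => (0 : QuadraticForm R M)
local notation "EE" => CliffordAlgebra (0 : QuadraticForm R M)

lemma ι_anticomm (a b : M) : ι Q0 a * ι Q0 b = -(ι Q0 b * ι Q0 a) := by
  exact eq_neg_of_add_eq_zero_left (ExteriorAlgebra.ι_add_mul_swap a b)

lemma even_ι_comm (z : M) (x : EE) (hx : x ∈ evenOdd Q0 0) :
    ι Q0 z * x = x * ι Q0 z := by
  induction x, hx using even_induction with
  | algebraMap r => exact (Algebra.commutes r _).symm
  | add x y hx hy ihx ihy => rw [mul_add, add_mul, ihx, ihy]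
  | ι_mul_ι_mul a b x hx ih =>
      have h1 : ι Q0 z * ι Q0 a = -(ι Q0 a * ι Q0 z) := ι_anticomm _ _
      have h2 : ι Q0 z * ι Q0 b = -(ι Q0 b * ι Q0 z) := ι_anticomm _ _
      rw [show ι Q0 z * (ι Q0 a * ι Q0 b * x) = ι Q0 z * ι Q0 a * ι Q0 b * x by
            noncomm_ring, h1,
          show -(ι Q0 a * ι Q0 z) * ι Q0 b * x = -(ι Q0 a * (ι Q0 z * ι Q0 b * x)) by
            noncomm_ring, h2,
          show -(ι Q0 a * (-(ι Q0 b * ι Q0 z) * x)) = ι Q0 a * ι Q0 b * (ι Q0 z * x) by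
            noncomm_ring, ih]
      noncomm_ring

lemma even_mem_center (x : EE) (hx : x ∈ evenOdd Q0 0) :
    x ∈ Set.center EE := by
  rw [Semigroup.mem_center_iff]
  intro y
  induction y using CliffordAlgebra.induction with
  | algebraMap r => exact Algebra.commutes r x
  | ι z => exact even_ι_comm z x hx
  | mul a b iha ihb => rw [mul_assoc, ihb, ← mul_assoc, iha, mul_assoc]
  | add a b iha ihb => rw [add_mul, mul_add, iha, ihb]

lemma odd_ι_anticomm (g : M) (y : EE) (hy : y ∈ evenOdd Q0 1) :
    ι Q0 g * y = -(y * ι Q0 g) := by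
  induction y, hy using odd_induction with
  | ι v => exact ι_anticomm g v
  | add x y hx hy ihx ihy => rw [mul_add, ihx, ihy, add_mul]; abel
  | ι_mul_ι_mul a b x hx ih =>
      have h1 : ι Q0 g * ι Q0 a = -(ι Q0 a * ι Q0 g) := ι_anticomm _ _
      have h2 : ι Q0 g * ι Q0 b = -(ι Q0 b * ι Q0 g) := ι_anticomm _ _
      rw [show ι Q0 g * (ι Q0 a * ι Q0 b * x) = ι Q0 g * ι Q0 a * ι Q0 b * x by
            noncomm_ring, h1,
          show -(ι Q0 a * ι Q0 g) * ι Q0 b * x = -(ι Q0 a * (ι Q0 g * ι Q0 b * x)) by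
            noncomm_ring, h2,
          show -(ι Q0 a * (-(ι Q0 b * ι Q0 g) * x)) = ι Q0 a * ι Q0 b * (ι Q0 g * x) by
            noncomm_ring, ih]
      noncomm_ring


/-- Projection onto the degree-`i` component of the even/odd grading. -/
def proj (i : ZMod 2) (x : EE) : EE :=
  (DirectSum.decompose (evenOdd Q0) x i : EE)

lemma proj_mem (i : ZMod 2) (x : EE) : proj i x ∈ evenOdd Q0 i :=
  Submodule.coe_mem _

lemma proj_add (i : ZMod 2) (x y : EE) : proj i (x + y) = proj i x + proj i y := by
  simp [proj, DirectSum.decompose_add]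

/-- `proj` as an additive monoid hom. -/
def projHom (i : ZMod 2) : EE →+ EE :=
  AddMonoidHom.mk' (proj i) (proj_add i)

lemma proj_sum {α : Type*} (i : ZMod 2) (s : Finset α) (f : α → EE) :
    proj i (∑ a ∈ s, f a) = ∑ a ∈ s, proj i (f a) :=
  map_sum (projHom i) f s

lemma proj_of_mem_same {i : ZMod 2} {x : EE} (hx : x ∈ evenOdd Q0 i) : proj i x = x :=
  DirectSum.decompose_of_mem_same _ hx

lemma proj_of_mem_ne {i j : ZMod 2} {x : EE} (hx : x ∈ evenOdd Q0 i) (hij : i ≠ j) :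
    proj j x = 0 :=
  DirectSum.decompose_of_mem_ne _ hx hij

lemma proj_add_proj (x : EE) : proj 0 x + proj 1 x = x := by
  classical
  have h2 : ∑ i ∈ (DirectSum.decompose (evenOdd Q0) x).support, proj i x
      = ∑ i : ZMod 2, proj i x :=
    Finset.sum_subset (Finset.subset_univ _) (fun i _ hi => by
      show (DirectSum.decompose (evenOdd Q0) x i : EE) = 0
      rw [DFinsupp.notMem_support_iff.mp hi]
      rfl)
  have h1 : ∑ i : ZMod 2, proj i x = x := by
    rw [← h2]
    exact DirectSum.sum_support_decompose (evenOdd Q0) x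
  conv_rhs => rw [← h1]
  rw [show (Finset.univ : Finset (ZMod 2)) = {0, 1} from by decide,
    Finset.sum_pair (by decide)]


lemma proj_one_mul (a b : EE) :
    proj 1 (a * b) = proj 0 a * proj 1 b + proj 1 a * proj 0 b := by
  have h00 : proj 0 a * proj 0 b ∈ evenOdd Q0 0 := by
    have := SetLike.mul_mem_graded (proj_mem 0 a) (proj_mem 0 b)
    simpa using this
  have h01 : proj 0 a * proj 1 b ∈ evenOdd Q0 1 := by
    have := SetLike.mul_mem_graded (proj_mem 0 a) (proj_mem 1 b)
    simpa using this
  have h10 : proj 1 a * proj 0 b ∈ evenOdd Q0 1 := by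
    have := SetLike.mul_mem_graded (proj_mem 1 a) (proj_mem 0 b)
    simpa using this
  have h11 : proj 1 a * proj 1 b ∈ evenOdd Q0 0 := by
    have := SetLike.mul_mem_graded (proj_mem 1 a) (proj_mem 1 b)
    rwa [show (1 + 1 : ZMod 2) = 0 from by decide] at this
  conv_lhs => rw [← proj_add_proj a, ← proj_add_proj b]
  rw [add_mul, mul_add, mul_add, proj_add, proj_add, proj_add,
    proj_of_mem_ne h00 (by decide), proj_of_mem_same h01,
    proj_of_mem_same h10, proj_of_mem_ne h11 (by decide)]
  abel

lemma contract_mul (d : Module.Dual R M) (x y : EE) :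
    contractLeft (Q := Q0) d (x * y)
      = contractLeft (Q := Q0) d x * y + involute x * contractLeft (Q := Q0) d y := by
  induction x using CliffordAlgebra.induction generalizing y with
  | algebraMap r =>
      rw [← Algebra.smul_def, map_smul, contractLeft_algebraMap, zero_mul, zero_add,
        AlgHom.commutes, ← Algebra.smul_def]
  | ι m =>
      rw [contractLeft_ι_mul, contractLeft_ι, involute_ι, ← Algebra.smul_def, neg_mul,
        sub_eq_add_neg]
  | mul a b iha ihb =>
      rw [mul_assoc, iha, ihb, iha b, map_mul]
      noncomm_ring
  | add a b iha ihb =>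
      rw [add_mul, map_add, iha, ihb, map_add, map_add]
      noncomm_ring

/-- The algebra endomorphism `ι x ↦ ι x * (1 + ι g)`. -/
def Phi (g : M) : EE →ₐ[R] EE :=
  CliffordAlgebra.lift Q0
    ⟨(LinearMap.mulRight R (1 + ι Q0 g)).comp (ι Q0), by
      intro m
      have h1 : (1 + ι Q0 g) * ι Q0 m = ι Q0 m * (1 - ι Q0 g) := by
        rw [add_mul, one_mul, ι_anticomm g m, mul_sub, mul_one]
        abel
      show ι Q0 m * (1 + ι Q0 g) * (ι Q0 m * (1 + ι Q0 g)) = _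
      rw [show ι Q0 m * (1 + ι Q0 g) * (ι Q0 m * (1 + ι Q0 g))
          = ι Q0 m * ((1 + ι Q0 g) * ι Q0 m) * (1 + ι Q0 g) from by noncomm_ring, h1,
        show ι Q0 m * (ι Q0 m * (1 - ι Q0 g)) * (1 + ι Q0 g)
          = ι Q0 m * ι Q0 m * ((1 - ι Q0 g) * (1 + ι Q0 g)) from by noncomm_ring,
        ExteriorAlgebra.ι_sq_zero, zero_mul]
      simp⟩

lemma Phi_ι (g m : M) : Phi g (ι Q0 m) = ι Q0 m * (1 + ι Q0 g) :=
  CliffordAlgebra.lift_ι_apply _ _ _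

lemma Phi_apply (g : M) (x : EE) : Phi g x = x + proj 1 x * ι Q0 g := by
  induction x using CliffordAlgebra.induction with
  | algebraMap r =>
      rw [AlgHom.commutes,
        proj_of_mem_ne (SetLike.algebraMap_mem_graded (evenOdd Q0) r) (by decide : (0 : ZMod 2) ≠ 1),
        zero_mul, add_zero]
  | ι m =>
      rw [Phi_ι, proj_of_mem_same (ι_mem_evenOdd_one Q0 m), mul_add, mul_one]
  | mul a b iha ihb =>
      have hb0 : ι Q0 g * proj 0 b = proj 0 b * ι Q0 g := even_ι_comm g _ (proj_mem 0 b)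
      have hb1 : ι Q0 g * proj 1 b = -(proj 1 b * ι Q0 g) := odd_ι_anticomm g _ (proj_mem 1 b)
      have hgb : ι Q0 g * b = proj 0 b * ι Q0 g - proj 1 b * ι Q0 g := by
        conv_lhs => rw [← proj_add_proj b]
        rw [mul_add, hb0, hb1, sub_eq_add_neg]
      have hgg : ι Q0 g * ι Q0 g = 0 := ExteriorAlgebra.ι_sq_zero g
      rw [map_mul, iha, ihb, proj_one_mul]
      rw [show (a + proj 1 a * ι Q0 g) * (b + proj 1 b * ι Q0 g)
          = a * b + a * (proj 1 b * ι Q0 g) + proj 1 a * (ι Q0 g * b)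
            + proj 1 a * (ι Q0 g * proj 1 b) * ι Q0 g from by noncomm_ring, hgb, hb1]
      rw [show proj 1 a * -(proj 1 b * ι Q0 g) * ι Q0 g
          = -(proj 1 a * proj 1 b * (ι Q0 g * ι Q0 g)) from by noncomm_ring, hgg]
      rw [show a * (proj 1 b * ι Q0 g) = (proj 0 a + proj 1 a) * (proj 1 b * ι Q0 g) from by
        rw [proj_add_proj]]
      noncomm_ring
  | add a b iha ihb =>
      rw [map_add, iha, ihb, proj_add, add_mul]
      abel


section Finsupp

variable (R : Type*) [CommRing R]

local notation "QF" => (0 : QuadraticForm R (ℕ →₀ R))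
local notation "EF" => CliffordAlgebra (0 : QuadraticForm R (ℕ →₀ R))

/-- Generators with index below `N`. -/
def genSet (N : ℕ) : Set EF :=
  (fun i => ι QF (Finsupp.single i (1 : R))) '' {i | i < N}

lemma genSet_mono {N N' : ℕ} (h : N ≤ N') : genSet R N ⊆ genSet R N' :=
  Set.image_mono (fun i hi => lt_of_lt_of_le hi h)

set_option maxHeartbeats 1000000 in
lemma exists_mem_adjoin (x : EF) : ∃ N, x ∈ Algebra.adjoin R (genSet R N) := by
  induction x using CliffordAlgebra.induction with
  | algebraMap r => exact ⟨0, Subalgebra.algebraMap_mem _ r⟩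
  | ι v =>
      refine ⟨(v.support.sup id) + 1, ?_⟩
      have hv : ∑ i ∈ v.support, v i • Finsupp.single i (1 : R) = v := by
        rw [show (∑ i ∈ v.support, v i • Finsupp.single i (1 : R))
            = ∑ i ∈ v.support, Finsupp.single i (v i) from
          Finset.sum_congr rfl fun i _ => Finsupp.smul_single_one i (v i)]
        exact Finsupp.sum_single v
      have hv2 : ι QF v = ∑ i ∈ v.support, v i • ι QF (Finsupp.single i (1 : R)) := by
        conv_lhs => rw [← hv]
        rw [map_sum]
        exact Finset.sum_congr rfl fun i _ => map_smul _ _ _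
      rw [hv2]
      refine Subalgebra.sum_mem _ fun i hi => ?_
      have hi' : i ∈ {j | j < v.support.sup id + 1} :=
        Nat.lt_succ_of_le (Finset.le_sup (f := id) hi)
      have hmem : ι QF (Finsupp.single i (1 : R)) ∈ genSet R (v.support.sup id + 1) :=
        ⟨i, hi', rfl⟩
      exact Subalgebra.smul_mem _ (Algebra.subset_adjoin hmem) _
  | mul a b iha ihb =>
      obtain ⟨Na, ha⟩ := iha
      obtain ⟨Nb, hb⟩ := ihb
      exact ⟨max Na Nb, Subalgebra.mul_mem _
        (Algebra.adjoin_mono (genSet_mono R (le_max_left _ _)) ha)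
        (Algebra.adjoin_mono (genSet_mono R (le_max_right _ _)) hb)⟩
  | add a b iha ihb =>
      obtain ⟨Na, ha⟩ := iha
      obtain ⟨Nb, hb⟩ := ihb
      exact ⟨max Na Nb, Subalgebra.add_mem _
        (Algebra.adjoin_mono (genSet_mono R (le_max_left _ _)) ha)
        (Algebra.adjoin_mono (genSet_mono R (le_max_right _ _)) hb)⟩

lemma contract_vanish {N : ℕ} {x : EF} (hx : x ∈ Algebra.adjoin R (genSet R N))
    (d : Module.Dual R (ℕ →₀ R)) (hd : ∀ i, i < N → d (Finsupp.single i 1) = 0) :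
    contractLeft (Q := QF) d x = 0 := by
  induction hx using Algebra.adjoin_induction with
  | mem y hy =>
      obtain ⟨i, hi, rfl⟩ := hy
      rw [contractLeft_ι, hd i hi, map_zero]
  | algebraMap r => exact contractLeft_algebraMap _ _ _
  | add y z hy hz ihy ihz => rw [map_add, ihy, ihz, add_zero]
  | mul y z hy hz ihy ihz => rw [contract_mul, ihy, ihz, zero_mul, mul_zero, add_zero]

lemma mul_ι_fresh_ne_zero {x : EF} (hx : x ≠ 0) :
    ∃ g : ℕ →₀ R, x * ι QF g ≠ 0 := by
  obtain ⟨N, hN⟩ := exists_mem_adjoin R x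
  refine ⟨Finsupp.single N 1, fun hc => hx ?_⟩
  have hd : ∀ i, i < N → Finsupp.lapply (M := R) (R := R) N (Finsupp.single i 1) = 0 := by
    intro i hi
    exact Finsupp.single_eq_of_ne' (Nat.ne_of_lt hi)
  have h0 := congrArg (contractLeft (Q := QF) (Finsupp.lapply N)) hc
  rw [map_zero, contract_mul, contract_vanish R hN _ hd, zero_mul, zero_add,
    contractLeft_ι] at h0
  have hlap : Finsupp.lapply (M := R) (R := R) N (Finsupp.single N 1) = 1 :=
    Finsupp.single_eq_same
  rw [hlap, map_one, mul_one] at h0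
  have := congrArg (involute (Q := QF)) h0
  rwa [involute_involute, map_zero] at this

end Finsupp


section Mlin

variable {F : Type*} [CommSemiring F] {A : Type*} [Semiring A] [Algebra F A] {n : ℕ}

lemma ofFn_prod_update_add (u : Fin n → A) (k : Fin n) (x y : A) :
    (List.ofFn (Function.update u k (x + y))).prod
      = (List.ofFn (Function.update u k x)).prod + (List.ofFn (Function.update u k y)).prod := by
  induction n with
  | zero => exact k.elim0
  | succ n ih =>
    rw [List.ofFn_succ, List.ofFn_succ, List.ofFn_succ, List.prod_cons, List.prod_cons,
      List.prod_cons]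
    cases k using Fin.cases with
    | zero =>
        have hc : ∀ z : A, (fun i : Fin n => Function.update u 0 z i.succ)
            = fun i : Fin n => u i.succ :=
          fun z => funext fun i => Function.update_of_ne (Fin.succ_ne_zero i) _ _
        simp only [Function.update_self, hc]
        rw [add_mul]
    | succ k' =>
        have hc : ∀ z : A, (fun i : Fin n => Function.update u k'.succ z i.succ)
            = Function.update (fun i : Fin n => u i.succ) k' z := by
          intro z
          funext i
          by_cases hik : i = k'
          · subst hik
            rw [Function.update_self, Function.update_self]
          · rw [Function.update_of_ne (fun hc' => hik (Fin.succ_injective n hc')) _ _,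
              Function.update_of_ne hik _ _]
        have h0 : ∀ z : A, Function.update u k'.succ z 0 = u 0 :=
          fun z => Function.update_of_ne (Fin.succ_ne_zero k').symm _ _
        simp only [h0, hc]
        rw [ih, mul_add]

lemma mlinEval_update_add (lam : Equiv.Perm (Fin n) → F) (v : Fin n → A) (j : Fin n) (x y : A) :
    mlinEval lam (Function.update v j (x + y))
      = mlinEval lam (Function.update v j x) + mlinEval lam (Function.update v j y) := by
  unfold mlinEval
  rw [← Finset.sum_add_distrib]
  refine Finset.sum_congr rfl fun σ _ => ?_
  have key : ∀ z : A, (fun i => Function.update v j z (σ i))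
      = Function.update (fun i => v (σ i)) (σ⁻¹ j) z := by
    intro z
    have h := Function.update_comp_eq_of_injective v σ.injective (σ⁻¹ j) z
    rw [show σ (σ⁻¹ j) = j from Equiv.apply_symm_apply σ j] at h
    exact h
  rw [key, key, key, ofFn_prod_update_add, smul_add]

lemma mlinEval_expand (lam : Equiv.Perm (Fin n) → F) (P Q : Fin n → A) :
    ∀ (s : Finset (Fin n)) (v : Fin n → A), (∀ i ∈ s, v i = P i + Q i) →
    mlinEval lam v = ∑ t ∈ s.powerset,
      mlinEval lam (fun i => if i ∈ s then (if i ∈ t then Q i else P i) else v i) := by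
  classical
  intro s
  induction s using Finset.induction_on with
  | empty =>
      intro v hv
      simp
  | @insert j s hj ih =>
      intro v hv
      have hvj : v j = P j + Q j := hv j (Finset.mem_insert_self j s)
      have step : mlinEval lam v = mlinEval lam (Function.update v j (P j))
          + mlinEval lam (Function.update v j (Q j)) := by
        conv_lhs => rw [← Function.update_eq_self j v]
        rw [hvj, mlinEval_update_add]
      have hP : ∀ i ∈ s, Function.update v j (P j) i = P i + Q i := fun i hi => by
        rw [Function.update_of_ne (fun hij => hj (by rwa [hij] at hi)) _ _]
        exact hv i (Finset.mem_insert_of_mem hi)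
      have hQ : ∀ i ∈ s, Function.update v j (Q j) i = P i + Q i := fun i hi => by
        rw [Function.update_of_ne (fun hij => hj (by rwa [hij] at hi)) _ _]
        exact hv i (Finset.mem_insert_of_mem hi)
      rw [step, ih _ hP, ih _ hQ, Finset.sum_powerset_insert hj]
      congr 1
      · refine Finset.sum_congr rfl fun t ht => ?_
        have hjt : j ∉ t := fun hc => hj (Finset.mem_powerset.mp ht hc)
        congr 1
        funext i
        by_cases hij : i = j
        · subst hij
          simp [hj, hjt, Function.update_self]
        · simp only [Finset.mem_insert, hij, false_or, Function.update_of_ne hij]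
      · refine Finset.sum_congr rfl fun t ht => ?_
        have hjt : j ∉ t := fun hc => hj (Finset.mem_powerset.mp ht hc)
        congr 1
        funext i
        by_cases hij : i = j
        · subst hij
          simp [hj, Function.update_self]
        · have hit : i ∈ insert j t ↔ i ∈ t := by simp [Finset.mem_insert, hij]
          simp only [Finset.mem_insert, hij, false_or, Function.update_of_ne hij, hit]

/-- Evaluations of algebra maps commute with `mlinEval`. -/
lemma map_mlinEval {B : Type*} [Semiring B] [Algebra F B] (φ : A →ₐ[F] B)
    (lam : Equiv.Perm (Fin n) → F) (v : Fin n → A) :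
    mlinEval lam (fun i => φ (v i)) = φ (mlinEval lam v) := by
  unfold mlinEval
  rw [map_sum]
  refine Finset.sum_congr rfl fun σ _ => ?_
  rw [map_smul, map_list_prod, List.map_ofFn]
  rfl

end Mlin

section Graded

variable {n : ℕ}

lemma mlinEval_mem_graded (lam : Equiv.Perm (Fin n) → R)
    (w : Fin n → CliffordAlgebra Q0) (g : Fin n → ZMod 2)
    (hw : ∀ i, w i ∈ evenOdd Q0 (g i)) :
    mlinEval lam w ∈ evenOdd Q0 (∑ i, g i) := by
  refine Submodule.sum_mem _ fun σ _ => Submodule.smul_mem _ _ ?_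
  have h1 : (List.ofFn fun i => w (σ i)) = (List.finRange n).map fun i => w (σ i) :=
    List.ofFn_eq_map
  have h2 := SetLike.list_prod_map_mem_graded (A := evenOdd Q0) (List.finRange n)
    (fun i => g (σ i)) (fun i => w (σ i)) (fun j _ => hw (σ j))
  have h3 : ((List.finRange n).map fun i => g (σ i)).sum = ∑ i, g i := by
    rw [← Fin.sum_univ_def]
    exact Equiv.sum_comp σ g
  rw [h1]
  rw [h3] at h2
  exact h2

end Graded

lemma proj_zero (i : ZMod 2) : proj (R := R) (M := M) i 0 = 0 := by
  simp [proj]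

section Main

variable {F : Type*} [Field F] {m : ℕ}

local notation "QQ" => (0 : QuadraticForm F (ℕ →₀ F))

lemma central_of_proj_ne_zero (lam : Equiv.Perm (Fin m) → F)
    (v : Fin m → CliffordAlgebra QQ)
    (h0 : proj 0 (mlinEval lam v) ≠ 0) :
    ∃ a : Fin m → CliffordAlgebra QQ,
      mlinEval lam a ≠ 0 ∧ mlinEval lam a ∈ Set.center (CliffordAlgebra QQ) := by
  classical
  have hexp := mlinEval_expand lam (fun i => proj 0 (v i)) (fun i => proj 1 (v i))
    Finset.univ v (fun i _ => (proj_add_proj (v i)).symm)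
  rw [hexp, proj_sum] at h0
  obtain ⟨t, _, ht⟩ := Finset.exists_ne_zero_of_sum_ne_zero h0
  set W : Fin m → CliffordAlgebra QQ := fun i =>
    if i ∈ Finset.univ then (if i ∈ t then proj 1 (v i) else proj 0 (v i)) else v i with hW
  have hWg : ∀ i, W i ∈ evenOdd QQ (if i ∈ t then (1 : ZMod 2) else 0) := by
    intro i
    by_cases hit : i ∈ t <;> simp [hW, hit, proj_mem]
  have hmem := mlinEval_mem_graded lam W _ hWg
  have hsum : (∑ i : Fin m, if i ∈ t then (1 : ZMod 2) else 0) = (t.card : ZMod 2) := by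
    rw [Finset.sum_ite_mem, Finset.univ_inter, Finset.sum_const, nsmul_eq_mul, mul_one]
  rw [hsum] at hmem
  by_cases hc : ((t.card : ZMod 2)) = 0
  · rw [hc] at hmem
    refine ⟨W, fun hzero => ht ?_, even_mem_center _ hmem⟩
    rw [hzero] at ht ⊢
    exact proj_zero 0
  · have hc1 : ((t.card : ZMod 2)) = 1 := by
      have hz : ∀ z : ZMod 2, z ≠ 0 → z = 1 := by decide
      exact hz _ hc
    rw [hc1] at hmem
    exact absurd (proj_of_mem_ne hmem (by decide)) ht

end Main

end GrassmannAux

/-- In the infinite-dimensional Grassmann algebra over a field of characteristic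

zero, every multilinear non-identity admits a nonzero central evaluation. -/
theorem grassmann_multilinear_central_value
    (F : Type*) [Field F] [CharZero F] {m : ℕ} (lam : Equiv.Perm (Fin m) → F)
    (h : ¬ ∀ v : Fin m → ExteriorAlgebra F (ℕ →₀ F), mlinEval lam v = 0) :
    ∃ a : Fin m → ExteriorAlgebra F (ℕ →₀ F),
      mlinEval lam a ≠ 0 ∧ mlinEval lam a ∈ Set.center (ExteriorAlgebra F (ℕ →₀ F)) := by
  classical
  push_neg at h
  obtain ⟨v, hv⟩ := h
  by_cases h0 : GrassmannAux.proj 0 (mlinEval lam v) = 0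
  · set u := mlinEval lam v with hu
    have hu1 : u ∈ CliffordAlgebra.evenOdd (0 : QuadraticForm F (ℕ →₀ F)) 1 := by
      have hp := GrassmannAux.proj_add_proj u
      rw [h0, zero_add] at hp
      rw [← hp]
      exact GrassmannAux.proj_mem 1 u
    obtain ⟨g, hg⟩ := GrassmannAux.mul_ι_fresh_ne_zero F hv
    have hPhi : mlinEval lam (fun i => GrassmannAux.Phi g (v i)) = GrassmannAux.Phi g u :=
      GrassmannAux.map_mlinEval (GrassmannAux.Phi g) lam v
    have hproj : GrassmannAux.proj 0 (mlinEval lam (fun i => GrassmannAux.Phi g (v i)))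
        = u * CliffordAlgebra.ι (0 : QuadraticForm F (ℕ →₀ F)) g := by
      rw [hPhi, GrassmannAux.Phi_apply, GrassmannAux.proj_of_mem_same hu1,
        GrassmannAux.proj_add, h0, zero_add]
      refine GrassmannAux.proj_of_mem_same ?_
      have hmul := SetLike.mul_mem_graded hu1
        (CliffordAlgebra.ι_mem_evenOdd_one (0 : QuadraticForm F (ℕ →₀ F)) g)
      rwa [show (1 + 1 : ZMod 2) = 0 from by decide] at hmul
    exact GrassmannAux.central_of_proj_ne_zero lam _ (by rw [hproj]; exact hg)
  · exact GrassmannAux.central_of_proj_ne_zero lam v h0
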